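/- Let 0 < q < 1, let r ∈ ℝ with q² < r < 1, and let θ, τ ∈ ℝ. Then 1/(2π) + (1/π)·∑_{k=1}^∞ r^k·[((1+(q/r)^(2k))/(1+q^(2k)))·cos(kθ)·cos(kτ) + ((1−(q/r)^(2k))/(1−q^(2k)))·sin(kθ)·sin(kτ)] = (1/(2π))·(1−r²)/(1−2r·cos(θ−τ)+r²) + (1/(2π))·∑_{j=0}^∞ [ (r²−q^(4(2j+1)))/(r²−2r·q^(2(2j+1))·cos(θ+τ)+q^(4(2j+1))) − (1−r²·q^(4(2j+1)))/(1−2r·q^(2(2j+1))·cos(θ+τ)+r²·q^(4(2j+1))) − (r²−q^(8(j+1)))/(r²−2r·q^(4(j+1))·cos(θ−τ)+q^(8(j+1))) + (1−r²·q^(8(j+1)))/(1−2r·q^(4(j+1))·cos(θ−τ)+r²·q^(8(j+1))) ], where both series converge absolutely. -/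

import Mathlib

open Real

noncomputable def pS (x φ : ℝ) : ℝ :=
  (x * Real.cos φ - x ^ 2) / (1 - 2 * x * Real.cos φ + x ^ 2)

lemma D_pos {x : ℝ} (φ : ℝ) (hx : |x| < 1) : 0 < 1 - 2 * x * Real.cos φ + x ^ 2 := by
  have h3 : 2 * x * Real.cos φ ≤ 2 * |x| := by
    calc 2 * x * Real.cos φ ≤ |2 * x * Real.cos φ| := le_abs_self _
    _ = 2 * |x| * |Real.cos φ| := by rw [abs_mul, abs_mul, abs_two]
    _ ≤ 2 * |x| := by nlinarith [Real.abs_cos_le_one φ, abs_nonneg x]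
  have h4 : (0:ℝ) < (1 - |x|) ^ 2 := pow_pos (by linarith) 2
  nlinarith [sq_abs x]

lemma hasSum_pS {x : ℝ} (φ : ℝ) (hx : |x| < 1) :
    HasSum (fun k : ℕ => x ^ (k + 1) * Real.cos (((k : ℝ) + 1) * φ)) (pS x φ) := by
  set z : ℂ := x * Complex.exp (φ * Complex.I) with hz
  have hze : ∀ k : ℕ, z ^ (k + 1)
      = (x ^ (k + 1) : ℝ) * Complex.exp ((((k : ℝ) + 1) * φ) * Complex.I) := by
    intro k
    rw [hz, mul_pow, ← Complex.exp_nat_mul]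
    push_cast
    ring_nf
  have hzabs : ‖z‖ < 1 := by
    rw [hz, norm_mul, Complex.norm_exp_ofReal_mul_I, mul_one, Complex.norm_real]
    simpa using hx
  have hgeo : HasSum (fun k : ℕ => z ^ (k + 1)) (z * (1 - z)⁻¹) := by
    simpa [pow_succ, mul_comm] using (hasSum_geometric_of_norm_lt_one hzabs).mul_left z
  have hre := Complex.hasSum_re hgeo
  have hterm : ∀ k : ℕ, (z ^ (k + 1)).re = x ^ (k + 1) * Real.cos (((k : ℝ) + 1) * φ) := by
    intro k
    have hc : ((((k : ℝ) : ℂ) + 1) * (φ : ℂ) * Complex.I) = ↑(((k : ℝ) + 1) * φ) * Complex.I := by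
      push_cast; ring
    rw [hze k, hc, Complex.re_ofReal_mul, Complex.exp_ofReal_mul_I_re]
  have hsum : (z * (1 - z)⁻¹).re = pS x φ := by
    have hzre : z.re = x * Real.cos φ := by
      rw [hz, Complex.re_ofReal_mul, Complex.exp_ofReal_mul_I_re]
    have hzim : z.im = x * Real.sin φ := by
      rw [hz, Complex.im_ofReal_mul, Complex.exp_ofReal_mul_I_im]
    rw [← div_eq_mul_inv, Complex.div_re]
    have hnsq : Complex.normSq (1 - z) = 1 - 2 * x * Real.cos φ + x ^ 2 := by
      rw [Complex.normSq_apply, Complex.sub_re, Complex.sub_im, Complex.one_re,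
        Complex.one_im, hzre, hzim]
      nlinarith [Real.sin_sq_add_cos_sq φ]
    rw [hnsq, Complex.sub_re, Complex.sub_im, Complex.one_re, Complex.one_im, hzre, hzim, pS]
    have hD := D_pos φ hx
    field_simp
    congr 1
    linear_combination (-x ^ 2) * Real.sin_sq_add_cos_sq φ
  rw [← hsum]
  exact hre.congr_fun fun k => (hterm k).symm

lemma pS_abs_le {x : ℝ} (φ : ℝ) (hx : |x| < 1) : |pS x φ| ≤ |x| / (1 - |x|) := by
  have h := hasSum_pS φ hx
  have hb : ∀ k : ℕ, ‖x ^ (k + 1) * Real.cos (((k : ℝ) + 1) * φ)‖ ≤ |x| ^ (k + 1) := by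
    intro k
    rw [norm_mul, norm_pow]
    calc ‖x‖ ^ (k+1) * ‖Real.cos (((k : ℝ) + 1) * φ)‖ ≤ ‖x‖ ^ (k+1) * 1 := by
          have h1 : ‖Real.cos (((k : ℝ) + 1) * φ)‖ ≤ 1 := by
            simpa using Real.abs_cos_le_one (((k : ℝ) + 1) * φ)
          nlinarith [pow_nonneg (norm_nonneg x) (k+1)]
    _ = |x| ^ (k+1) := by simp
  have hgs : HasSum (fun k : ℕ => |x| ^ (k + 1)) (|x| / (1 - |x|)) := by
    have := (hasSum_geometric_of_lt_one (abs_nonneg x) hx).mul_left |x|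
    simpa [pow_succ, mul_comm, div_eq_mul_inv] using this
  calc |pS x φ| = ‖pS x φ‖ := rfl
  _ ≤ |x| / (1 - |x|) := h.norm_le_of_bounded hgs hb

lemma poisson_closed {x : ℝ} (φ : ℝ) (hx : |x| < 1) :
    (1 - x ^ 2) / (1 - 2 * x * Real.cos φ + x ^ 2) = 1 + 2 * pS x φ := by
  have hD := D_pos φ hx
  rw [pS]
  rw [mul_div_assoc', one_add_div hD.ne', div_left_inj' hD.ne']
  ring

lemma quot_big {r a : ℝ} (φ : ℝ) (hr : 0 < r) (ha0 : 0 ≤ a) (har : a < r) :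
    (r ^ 2 - a ^ 2) / (r ^ 2 - 2 * r * a * Real.cos φ + a ^ 2) = 1 + 2 * pS (a / r) φ := by
  have hx : |a / r| < 1 := by
    rw [abs_of_nonneg (div_nonneg ha0 hr.le)]
    exact (div_lt_one hr).2 har
  have hD2 := D_pos φ hx
  have hkey : r ^ 2 - 2 * r * a * Real.cos φ + a ^ 2
      = r ^ 2 * (1 - 2 * (a / r) * Real.cos φ + (a / r) ^ 2) := by
    field_simp
  have hD1 : 0 < r ^ 2 - 2 * r * a * Real.cos φ + a ^ 2 := by
    rw [hkey]; positivity
  rw [← poisson_closed φ hx, div_eq_div_iff hD1.ne' hD2.ne']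
  field_simp

lemma core_algebra (a b CM CP C1 C2 S1 S2 : ℝ) (ha0 : 0 < a) (ha1 : a < 1) (hb : 0 < b)
    (hcc : C1 * C2 = (CM + CP) / 2) (hss : S1 * S2 = (CM - CP) / 2) :
    (1 - a ^ 4)⁻¹ * ((b - a ^ 4 / b) * CM + (a ^ 2 / b - b * a ^ 2) * CP)
      = b * ((1 + a ^ 2 / b ^ 2) / (1 + a ^ 2) * C1 * C2
          + (1 - a ^ 2 / b ^ 2) / (1 - a ^ 2) * S1 * S2) := by
  have h1 : (0:ℝ) < 1 - a ^ 2 := by nlinarith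
  have h2 : (0:ℝ) < 1 + a ^ 2 := by positivity
  have h4 : (0:ℝ) < 1 - a ^ 4 := by nlinarith
  rw [mul_assoc _ C1 C2, mul_assoc _ S1 S2, hcc, hss]
  field_simp
  ring

lemma frac_mono {x y s : ℝ} (hx0 : 0 ≤ x) (hxy : x ≤ y) (hys : y ≤ s) (hs : s < 1) :
    x / (1 - x) ≤ y / (1 - s) := by
  have h1 : (0:ℝ) < 1 - s := by linarith
  exact div_le_div₀ (by linarith) hxy h1 (by linarith)

lemma pS_bound_of_le {x b s : ℝ} (φ : ℝ) (hx0 : 0 ≤ x) (hxb : x ≤ b) (hbs : b ≤ s)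
    (hs1 : s < 1) : |pS x φ| ≤ b / (1 - s) := by
  have hx1 : |x| < 1 := by rw [abs_of_nonneg hx0]; linarith
  calc |pS x φ| ≤ |x| / (1 - |x|) := pS_abs_le φ hx1
  _ ≤ b / (1 - s) := by
      rw [abs_of_nonneg hx0]
      exact frac_mono hx0 hxb hbs hs1

noncomputable def Ck (q r θ τ : ℝ) (k : ℕ) : ℝ :=
  (r ^ (k+1) - (q ^ 4 / r) ^ (k+1)) * Real.cos (((k : ℝ) + 1) * (θ - τ))
    + ((q ^ 2 / r) ^ (k+1) - (r * q ^ 2) ^ (k+1)) * Real.cos (((k : ℝ) + 1) * (θ + τ))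

noncomputable def gk (q r θ τ : ℝ) (k j : ℕ) : ℝ :=
  (q ^ (4 * (k+1))) ^ j * Ck q r θ τ k

set_option maxHeartbeats 2000000 in
/-- the kernel of the annulus series solution equals a superposition
of classical Poisson kernels; both series converge absolutely. -/
theorem kernel_poisson_superposition
    (q r θ τ : ℝ) (hq0 : 0 < q) (hq1 : q < 1) (hr1 : q ^ 2 < r) (hr2 : r < 1)
    (L P : ℕ → ℝ)
    (hL : ∀ k : ℕ, L k =
      r ^ (k + 1) *
        (((1 + (q / r) ^ (2 * (k + 1))) / (1 + q ^ (2 * (k + 1))))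
            * Real.cos (((k : ℝ) + 1) * θ) * Real.cos (((k : ℝ) + 1) * τ)
          + ((1 - (q / r) ^ (2 * (k + 1))) / (1 - q ^ (2 * (k + 1))))
            * Real.sin (((k : ℝ) + 1) * θ) * Real.sin (((k : ℝ) + 1) * τ)))
    (hP : ∀ j : ℕ, P j =
      (r ^ 2 - q ^ (4 * (2 * j + 1)))
          / (r ^ 2 - 2 * r * q ^ (2 * (2 * j + 1)) * Real.cos (θ + τ) + q ^ (4 * (2 * j + 1)))
        - (1 - r ^ 2 * q ^ (4 * (2 * j + 1)))
          / (1 - 2 * r * q ^ (2 * (2 * j + 1)) * Real.cos (θ + τ) + r ^ 2 * q ^ (4 * (2 * j + 1)))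
        - (r ^ 2 - q ^ (8 * (j + 1)))
          / (r ^ 2 - 2 * r * q ^ (4 * (j + 1)) * Real.cos (θ - τ) + q ^ (8 * (j + 1)))
        + (1 - r ^ 2 * q ^ (8 * (j + 1)))
          / (1 - 2 * r * q ^ (4 * (j + 1)) * Real.cos (θ - τ) + r ^ 2 * q ^ (8 * (j + 1)))) :
    (Summable fun k : ℕ => |L k|) ∧ (Summable fun j : ℕ => |P j|) ∧
    1 / (2 * π) + (1 / π) * ∑' k : ℕ, L k
      = (1 / (2 * π)) * (1 - r ^ 2) / (1 - 2 * r * Real.cos (θ - τ) + r ^ 2)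
        + (1 / (2 * π)) * ∑' j : ℕ, P j := by
  have hr0 : 0 < r := lt_trans (pow_pos hq0 2) hr1
  set s : ℝ := max r (q ^ 2 / r) with hs
  have hs0 : 0 ≤ s := le_trans hr0.le (le_max_left _ _)
  have hs1 : s < 1 := max_lt hr2 ((div_lt_one hr0).2 hr1)
  have hrs : r ≤ s := le_max_left _ _
  have hq2r : q ^ 2 / r ≤ s := le_max_right _ _
  have hq42 : q ^ 4 ≤ q ^ 2 := pow_le_pow_of_le_one hq0.le hq1.le (by norm_num)
  have hq4r : q ^ 4 / r ≤ s := le_trans ((div_le_div_iff_of_pos_right hr0).2 hq42) hq2r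
  have hq21 : q ^ 2 ≤ 1 := pow_le_one₀ hq0.le hq1.le
  have hrq2 : r * q ^ 2 ≤ s := le_trans (by nlinarith) hrs
  have hrq4 : r * q ^ 4 ≤ s := le_trans (by nlinarith) hrs
  have hQ0 : (0:ℝ) ≤ q ^ 4 := by positivity
  have hQ1 : q ^ 4 < 1 := pow_lt_one₀ hq0.le hq1 (by norm_num)
  have hQj1 : ∀ j : ℕ, (q ^ 4) ^ j ≤ 1 := fun _ => pow_le_one₀ hQ0 hQ1.le
  have hQj0 : ∀ j : ℕ, (0:ℝ) ≤ (q ^ 4) ^ j := fun _ => by positivity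
  -- bound on Ck
  have hCkb : ∀ k : ℕ, |Ck q r θ τ k| ≤ 4 * s ^ (k + 1) := by
    intro k
    have habs : ∀ u v c : ℝ, |c| ≤ 1 → |(u - v) * c| ≤ |u| + |v| := by
      intro u v c hc
      calc |(u - v) * c| = |u - v| * |c| := abs_mul _ _
      _ ≤ |u - v| * 1 := by nlinarith [abs_nonneg (u - v)]
      _ = |u - v| := mul_one _
      _ ≤ |u| + |v| := abs_sub _ _
    have b1 : r ^ (k+1) ≤ s ^ (k+1) := pow_le_pow_left₀ hr0.le hrs _
    have b2 : (q ^ 4 / r) ^ (k+1) ≤ s ^ (k+1) := pow_le_pow_left₀ (by positivity) hq4r _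
    have b3 : (q ^ 2 / r) ^ (k+1) ≤ s ^ (k+1) := pow_le_pow_left₀ (by positivity) hq2r _
    have b4 : (r * q ^ 2) ^ (k+1) ≤ s ^ (k+1) := pow_le_pow_left₀ (by positivity) hrq2 _
    have n1 : (0:ℝ) ≤ r ^ (k+1) := by positivity
    have n2 : (0:ℝ) ≤ (q ^ 4 / r) ^ (k+1) := by positivity
    have n3 : (0:ℝ) ≤ (q ^ 2 / r) ^ (k+1) := by positivity
    have n4 : (0:ℝ) ≤ (r * q ^ 2) ^ (k+1) := by positivity
    rw [Ck]
    calc |(r ^ (k+1) - (q ^ 4 / r) ^ (k+1)) * Real.cos (((k : ℝ) + 1) * (θ - τ))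
          + ((q ^ 2 / r) ^ (k+1) - (r * q ^ 2) ^ (k+1)) * Real.cos (((k : ℝ) + 1) * (θ + τ))|
        ≤ |(r ^ (k+1) - (q ^ 4 / r) ^ (k+1)) * Real.cos (((k : ℝ) + 1) * (θ - τ))|
          + |((q ^ 2 / r) ^ (k+1) - (r * q ^ 2) ^ (k+1)) * Real.cos (((k : ℝ) + 1) * (θ + τ))| :=
        abs_add_le _ _
    _ ≤ (|r ^ (k+1)| + |(q ^ 4 / r) ^ (k+1)|)
          + (|(q ^ 2 / r) ^ (k+1)| + |(r * q ^ 2) ^ (k+1)|) :=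
        add_le_add (habs _ _ _ (Real.abs_cos_le_one _)) (habs _ _ _ (Real.abs_cos_le_one _))
    _ ≤ 4 * s ^ (k + 1) := by
        rw [abs_of_nonneg n1, abs_of_nonneg n2, abs_of_nonneg n3, abs_of_nonneg n4]
        linarith
  -- rows : sum over j of gk equals L k
  have hrowval : ∀ k : ℕ, HasSum (fun j : ℕ => gk q r θ τ k j)
      ((1 - q ^ (4 * (k+1)))⁻¹ * Ck q r θ τ k) := by
    intro k
    have hρ0 : (0:ℝ) ≤ q ^ (4 * (k+1)) := by positivity
    have hρ1 : q ^ (4 * (k+1)) < 1 := pow_lt_one₀ hq0.le hq1 (by omega)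
    have := (hasSum_geometric_of_lt_one hρ0 hρ1).mul_right (Ck q r θ τ k)
    simpa [gk] using this
  have hLrow : ∀ k : ℕ, L k = (1 - q ^ (4 * (k+1)))⁻¹ * Ck q r θ τ k := by
    intro k
    have ha0 : 0 < q ^ (k+1) := pow_pos hq0 _
    have ha1 : q ^ (k+1) < 1 := pow_lt_one₀ hq0.le hq1 (Nat.succ_ne_zero k)
    have hb : 0 < r ^ (k+1) := pow_pos hr0 _
    have w1 : (q / r) ^ (2 * (k + 1)) = (q ^ (k+1)) ^ 2 / (r ^ (k+1)) ^ 2 := by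
      rw [div_pow, show 2 * (k+1) = (k+1) * 2 by ring, pow_mul, pow_mul]
    have w2 : q ^ (2 * (k + 1)) = (q ^ (k+1)) ^ 2 := by
      rw [show 2 * (k+1) = (k+1) * 2 by ring, pow_mul]
    have w3 : q ^ (4 * (k + 1)) = (q ^ (k+1)) ^ 4 := by
      rw [show 4 * (k+1) = (k+1) * 4 by ring, pow_mul]
    have w4 : (q ^ 4 / r) ^ (k+1) = (q ^ (k+1)) ^ 4 / r ^ (k+1) := by
      rw [div_pow, ← pow_mul, show 4 * (k+1) = (k+1) * 4 by ring, pow_mul]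
    have w5 : (q ^ 2 / r) ^ (k+1) = (q ^ (k+1)) ^ 2 / r ^ (k+1) := by
      rw [div_pow, ← pow_mul, show 2 * (k+1) = (k+1) * 2 by ring, pow_mul]
    have w6 : (r * q ^ 2) ^ (k+1) = r ^ (k+1) * (q ^ (k+1)) ^ 2 := by
      rw [mul_pow, ← pow_mul, show 2 * (k+1) = (k+1) * 2 by ring, pow_mul]
    have hcc : Real.cos (((k : ℝ) + 1) * θ) * Real.cos (((k : ℝ) + 1) * τ)
        = (Real.cos (((k : ℝ) + 1) * (θ - τ)) + Real.cos (((k : ℝ) + 1) * (θ + τ))) / 2 := by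
      rw [mul_sub, mul_add, Real.cos_sub, Real.cos_add]; ring
    have hss : Real.sin (((k : ℝ) + 1) * θ) * Real.sin (((k : ℝ) + 1) * τ)
        = (Real.cos (((k : ℝ) + 1) * (θ - τ)) - Real.cos (((k : ℝ) + 1) * (θ + τ))) / 2 := by
      rw [mul_sub, mul_add, Real.cos_sub, Real.cos_add]; ring
    rw [hL k, Ck, w1, w2, w3, w4, w5, w6]
    exact (core_algebra (q ^ (k+1)) (r ^ (k+1)) _ _ _ _ _ _ ha0 ha1 hb hcc hss).symm
  have hrow : ∀ k : ℕ, HasSum (fun j : ℕ => gk q r θ τ k j) (L k) := by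
    intro k; rw [hLrow k]; exact hrowval k
  -- Summable |L|
  have hq4pos : (0:ℝ) < 1 - q ^ 4 := by linarith
  have hLb : ∀ k : ℕ, |L k| ≤ (4 / (1 - q ^ 4)) * s ^ (k + 1) := by
    intro k
    have hρ : q ^ (4 * (k+1)) ≤ q ^ 4 := pow_le_pow_of_le_one hq0.le hq1.le (by omega)
    have h2 : (0:ℝ) < 1 - q ^ (4 * (k+1)) := by linarith
    rw [hLrow k, abs_mul, abs_of_nonneg (by positivity : (0:ℝ) ≤ (1 - q ^ (4 * (k+1)))⁻¹)]
    calc (1 - q ^ (4 * (k+1)))⁻¹ * |Ck q r θ τ k|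
        ≤ (1 - q ^ 4)⁻¹ * (4 * s ^ (k+1)) :=
          mul_le_mul (inv_anti₀ hq4pos (by linarith)) (hCkb k) (abs_nonneg _)
            (by positivity)
    _ = (4 / (1 - q ^ 4)) * s ^ (k + 1) := by ring
  have hLabs : Summable fun k : ℕ => |L k| := by
    have hsum : Summable fun k : ℕ => (4 / (1 - q ^ 4)) * s ^ (k + 1) := by
      have h0 : (fun k : ℕ => (4 / (1 - q ^ 4)) * s ^ (k + 1))
          = fun k : ℕ => ((4 / (1 - q ^ 4)) * s) * s ^ k := by
        funext k; ring
      rw [h0]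
      exact (summable_geometric_of_lt_one hs0 hs1).mul_left _
    exact Summable.of_nonneg_of_le (fun k => abs_nonneg _) hLb hsum
  -- Summable uncurried gk
  have hgb : ∀ p : ℕ × ℕ, ‖gk q r θ τ p.1 p.2‖ ≤ (4 * s ^ (p.1 + 1)) * (q ^ 4) ^ p.2 := by
    rintro ⟨k, j⟩
    have h1 : (q ^ (4 * (k+1))) ^ j ≤ (q ^ 4) ^ j :=
      pow_le_pow_left₀ (by positivity) (pow_le_pow_of_le_one hq0.le hq1.le (by omega)) j
    have h2 : (0:ℝ) ≤ (q ^ (4 * (k+1))) ^ j := by positivity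
    calc ‖gk q r θ τ k j‖ = (q ^ (4 * (k+1))) ^ j * |Ck q r θ τ k| := by
          rw [gk, norm_mul, Real.norm_eq_abs, Real.norm_eq_abs, abs_of_nonneg h2]
    _ ≤ (q ^ 4) ^ j * (4 * s ^ (k + 1)) :=
          mul_le_mul h1 (hCkb k) (abs_nonneg _) (by positivity)
    _ = (4 * s ^ (k + 1)) * (q ^ 4) ^ j := by ring
  have hguncurry : Summable (Function.uncurry (gk q r θ τ)) := by
    apply Summable.of_norm_bounded ?_ hgb
    have hf : Summable fun k : ℕ => 4 * s ^ (k + 1) := by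
      have h0 : (fun k : ℕ => 4 * s ^ (k + 1)) = fun k : ℕ => (4 * s) * s ^ k := by
        funext k; ring
      rw [h0]
      exact (summable_geometric_of_lt_one hs0 hs1).mul_left _
    have hg : Summable fun j : ℕ => (q ^ 4) ^ j := summable_geometric_of_lt_one hQ0 hQ1
    exact hf.mul_of_nonneg hg (fun k => by positivity) (fun j => by positivity)
  -- telescoping sequence
  set f : ℕ → ℝ := fun j => pS (r * q ^ (4 * j)) (θ - τ) with hf_def
  -- columns
  have hcol : ∀ j : ℕ, HasSum (fun k : ℕ => gk q r θ τ k j)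
      (f j - pS (q ^ (4 * (j + 1)) / r) (θ - τ)
        + pS (q ^ (2 * (2 * j + 1)) / r) (θ + τ) - pS (r * q ^ (2 * (2 * j + 1))) (θ + τ)) := by
    intro j
    have hqj1 : q ^ (4 * j) ≤ 1 := pow_le_one₀ hq0.le hq1.le
    have hb1 : |r * q ^ (4 * j)| < 1 := by
      rw [abs_of_nonneg (by positivity)]; nlinarith
    have ht2 : q ^ (4 * (j + 1)) ≤ q ^ 2 := pow_le_pow_of_le_one hq0.le hq1.le (by omega)
    have hb2 : |q ^ (4 * (j + 1)) / r| < 1 := by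
      rw [abs_of_nonneg (by positivity), div_lt_one hr0]; linarith
    have ht3 : q ^ (2 * (2 * j + 1)) ≤ q ^ 2 := pow_le_pow_of_le_one hq0.le hq1.le (by omega)
    have hb3 : |q ^ (2 * (2 * j + 1)) / r| < 1 := by
      rw [abs_of_nonneg (by positivity), div_lt_one hr0]; linarith
    have hqj3 : q ^ (2 * (2 * j + 1)) ≤ 1 := pow_le_one₀ hq0.le hq1.le
    have hb4 : |r * q ^ (2 * (2 * j + 1))| < 1 := by
      rw [abs_of_nonneg (by positivity)]; nlinarith
    have h1 := hasSum_pS (θ - τ) hb1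
    have h2 := hasSum_pS (θ - τ) hb2
    have h3 := hasSum_pS (θ + τ) hb3
    have h4 := hasSum_pS (θ + τ) hb4
    have hcomb := ((h1.sub h2).add h3).sub h4
    rw [hf_def]
    refine hcomb.congr_fun fun k => ?_
    have p1 : (r * q ^ (4 * j)) ^ (k+1) = (q ^ (4 * (k+1))) ^ j * r ^ (k+1) := by
      rw [mul_pow, ← pow_mul, ← pow_mul]; ring
    have p2 : (q ^ (4 * (j + 1)) / r) ^ (k+1) = (q ^ (4 * (k+1))) ^ j * ((q ^ 4 / r) ^ (k+1)) := by
      rw [div_pow, div_pow, ← pow_mul, ← pow_mul, ← pow_mul,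
        show 4 * (j+1) * (k+1) = 4 * (k+1) + 4 * (k+1) * j by ring, pow_add]
      ring
    have p3 : (q ^ (2 * (2 * j + 1)) / r) ^ (k+1)
        = (q ^ (4 * (k+1))) ^ j * ((q ^ 2 / r) ^ (k+1)) := by
      rw [div_pow, div_pow, ← pow_mul, ← pow_mul, ← pow_mul,
        show 2 * (2 * j + 1) * (k+1) = 2 * (k+1) + 4 * (k+1) * j by ring, pow_add]
      ring
    have p4 : (r * q ^ (2 * (2 * j + 1))) ^ (k+1)
        = (q ^ (4 * (k+1))) ^ j * ((r * q ^ 2) ^ (k+1)) := by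
      rw [mul_pow, mul_pow, ← pow_mul, ← pow_mul, ← pow_mul,
        show 2 * (2 * j + 1) * (k+1) = 2 * (k+1) + 4 * (k+1) * j by ring, pow_add]
      ring
    simp only [gk, Ck]
    rw [p1, p2, p3, p4]
    ring
  -- closed form for P j
  have hPeq : ∀ j : ℕ, P j = 2 * pS (q ^ (2 * (2 * j + 1)) / r) (θ + τ)
      - 2 * pS (r * q ^ (2 * (2 * j + 1))) (θ + τ)
      - 2 * pS (q ^ (4 * (j + 1)) / r) (θ - τ)
      + 2 * pS (r * q ^ (4 * (j + 1))) (θ - τ) := by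
    intro j
    have ha1 : q ^ (2 * (2 * j + 1)) ≤ q ^ 2 := pow_le_pow_of_le_one hq0.le hq1.le (by omega)
    have ha2 : q ^ (4 * (j + 1)) ≤ q ^ 2 := pow_le_pow_of_le_one hq0.le hq1.le (by omega)
    have t1 : (r ^ 2 - q ^ (4 * (2 * j + 1)))
        / (r ^ 2 - 2 * r * q ^ (2 * (2 * j + 1)) * Real.cos (θ + τ) + q ^ (4 * (2 * j + 1)))
        = 1 + 2 * pS (q ^ (2 * (2 * j + 1)) / r) (θ + τ) := by
      rw [← quot_big (θ + τ) hr0 (by positivity : (0:ℝ) ≤ q ^ (2 * (2 * j + 1))) (by linarith)]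
      congr 1 <;> ring
    have hb4 : |r * q ^ (2 * (2 * j + 1))| < 1 := by
      have : q ^ (2 * (2 * j + 1)) ≤ 1 := pow_le_one₀ hq0.le hq1.le
      rw [abs_of_nonneg (by positivity)]; nlinarith
    have t2 : (1 - r ^ 2 * q ^ (4 * (2 * j + 1)))
        / (1 - 2 * r * q ^ (2 * (2 * j + 1)) * Real.cos (θ + τ) + r ^ 2 * q ^ (4 * (2 * j + 1)))
        = 1 + 2 * pS (r * q ^ (2 * (2 * j + 1))) (θ + τ) := by
      rw [← poisson_closed (θ + τ) hb4]
      congr 1 <;> ring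
    have t3 : (r ^ 2 - q ^ (8 * (j + 1)))
        / (r ^ 2 - 2 * r * q ^ (4 * (j + 1)) * Real.cos (θ - τ) + q ^ (8 * (j + 1)))
        = 1 + 2 * pS (q ^ (4 * (j + 1)) / r) (θ - τ) := by
      rw [← quot_big (θ - τ) hr0 (by positivity : (0:ℝ) ≤ q ^ (4 * (j + 1))) (by linarith)]
      congr 1 <;> ring
    have hb5 : |r * q ^ (4 * (j + 1))| < 1 := by
      have : q ^ (4 * (j + 1)) ≤ 1 := pow_le_one₀ hq0.le hq1.le
      rw [abs_of_nonneg (by positivity)]; nlinarith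
    have t4 : (1 - r ^ 2 * q ^ (8 * (j + 1)))
        / (1 - 2 * r * q ^ (4 * (j + 1)) * Real.cos (θ - τ) + r ^ 2 * q ^ (8 * (j + 1)))
        = 1 + 2 * pS (r * q ^ (4 * (j + 1))) (θ - τ) := by
      rw [← poisson_closed (θ - τ) hb5]
      congr 1 <;> ring
    rw [hP j, t1, t2, t3, t4]
    ring
  -- bounds on P and f, summability
  have e1 : ∀ j : ℕ, q ^ (2 * (2 * j + 1)) = q ^ 2 * (q ^ 4) ^ j := by
    intro j; rw [show 2 * (2 * j + 1) = 2 + 4 * j by ring, pow_add, pow_mul]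
  have e2 : ∀ j : ℕ, q ^ (4 * (j + 1)) = q ^ 4 * (q ^ 4) ^ j := by
    intro j; rw [show 4 * (j + 1) = 4 + 4 * j by ring, pow_add, pow_mul]
  have e0 : ∀ j : ℕ, q ^ (4 * j) = (q ^ 4) ^ j := fun j => pow_mul q 4 j
  have hbs : ∀ j : ℕ, s * (q ^ 4) ^ j ≤ s := by
    intro j
    calc s * (q ^ 4) ^ j ≤ s * 1 := mul_le_mul_of_nonneg_left (hQj1 j) hs0
    _ = s := mul_one s
  have hS1b : ∀ j : ℕ, |pS (q ^ (2 * (2 * j + 1)) / r) (θ + τ)| ≤ s * (q ^ 4) ^ j / (1 - s) := by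
    intro j
    refine pS_bound_of_le _ (by positivity) ?_ (hbs j) hs1
    rw [e1 j]
    calc q ^ 2 * (q ^ 4) ^ j / r = (q ^ 2 / r) * (q ^ 4) ^ j := by ring
    _ ≤ s * (q ^ 4) ^ j := mul_le_mul_of_nonneg_right hq2r (hQj0 j)
  have hS2b : ∀ j : ℕ, |pS (r * q ^ (2 * (2 * j + 1))) (θ + τ)| ≤ s * (q ^ 4) ^ j / (1 - s) := by
    intro j
    refine pS_bound_of_le _ (by positivity) ?_ (hbs j) hs1
    rw [e1 j]
    calc r * (q ^ 2 * (q ^ 4) ^ j) = (r * q ^ 2) * (q ^ 4) ^ j := by ring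
    _ ≤ s * (q ^ 4) ^ j := mul_le_mul_of_nonneg_right hrq2 (hQj0 j)
  have hS3b : ∀ j : ℕ, |pS (q ^ (4 * (j + 1)) / r) (θ - τ)| ≤ s * (q ^ 4) ^ j / (1 - s) := by
    intro j
    refine pS_bound_of_le _ (by positivity) ?_ (hbs j) hs1
    rw [e2 j]
    calc q ^ 4 * (q ^ 4) ^ j / r = (q ^ 4 / r) * (q ^ 4) ^ j := by ring
    _ ≤ s * (q ^ 4) ^ j := mul_le_mul_of_nonneg_right hq4r (hQj0 j)
  have hS4b : ∀ j : ℕ, |pS (r * q ^ (4 * (j + 1))) (θ - τ)| ≤ s * (q ^ 4) ^ j / (1 - s) := by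
    intro j
    refine pS_bound_of_le _ (by positivity) ?_ (hbs j) hs1
    rw [e2 j]
    calc r * (q ^ 4 * (q ^ 4) ^ j) = (r * q ^ 4) * (q ^ 4) ^ j := by ring
    _ ≤ s * (q ^ 4) ^ j := mul_le_mul_of_nonneg_right hrq4 (hQj0 j)
  have habs4 : ∀ a b c d M : ℝ, |a| ≤ M → |b| ≤ M → |c| ≤ M → |d| ≤ M →
      |2 * a - 2 * b - 2 * c + 2 * d| ≤ 8 * M := by
    intro a b c d M h1 h2 h3 h4
    rw [abs_le] at *
    constructor <;> linarith [h1.1, h1.2, h2.1, h2.2, h3.1, h3.2, h4.1, h4.2]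
  have hPb : ∀ j : ℕ, |P j| ≤ (8 * s / (1 - s)) * (q ^ 4) ^ j := by
    intro j
    rw [hPeq j]
    calc |2 * pS (q ^ (2 * (2 * j + 1)) / r) (θ + τ)
        - 2 * pS (r * q ^ (2 * (2 * j + 1))) (θ + τ)
        - 2 * pS (q ^ (4 * (j + 1)) / r) (θ - τ)
        + 2 * pS (r * q ^ (4 * (j + 1))) (θ - τ)|
        ≤ 8 * (s * (q ^ 4) ^ j / (1 - s)) :=
          habs4 _ _ _ _ _ (hS1b j) (hS2b j) (hS3b j) (hS4b j)
    _ = (8 * s / (1 - s)) * (q ^ 4) ^ j := by ring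
  have hPabs : Summable fun j : ℕ => |P j| :=
    Summable.of_nonneg_of_le (fun _ => abs_nonneg _) hPb
      ((summable_geometric_of_lt_one hQ0 hQ1).mul_left _)
  have hPs : Summable P := hPabs.of_abs
  have hfb : ∀ j : ℕ, |f j| ≤ s * (q ^ 4) ^ j / (1 - s) := by
    intro j
    rw [hf_def]
    refine pS_bound_of_le _ (by positivity) ?_ (hbs j) hs1
    rw [e0 j]
    exact mul_le_mul_of_nonneg_right hrs (hQj0 j)
  have hfsummable : Summable f := by
    refine (Summable.of_nonneg_of_le (fun _ => abs_nonneg _) hfb ?_).of_abs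
    have h0 : (fun j : ℕ => s * (q ^ 4) ^ j / (1 - s))
        = fun j : ℕ => (s / (1 - s)) * (q ^ 4) ^ j := by
      funext j; ring
    rw [h0]
    exact (summable_geometric_of_lt_one hQ0 hQ1).mul_left _
  have hfs : Summable fun j : ℕ => f (j + 1) := (summable_nat_add_iff 1).2 hfsummable
  -- assemble the tsum identity
  have hTP : ∀ j : ℕ, (f j - pS (q ^ (4 * (j + 1)) / r) (θ - τ)
      + pS (q ^ (2 * (2 * j + 1)) / r) (θ + τ) - pS (r * q ^ (2 * (2 * j + 1))) (θ + τ))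
      = P j / 2 + (f j - f (j + 1)) := by
    intro j
    have hfj1 : f (j + 1) = pS (r * q ^ (4 * (j + 1))) (θ - τ) := by rw [hf_def]
    rw [hPeq j, hfj1]
    ring
  have hcoltsum : ∑' k : ℕ, L k
      = ∑' j : ℕ, (f j - pS (q ^ (4 * (j + 1)) / r) (θ - τ)
        + pS (q ^ (2 * (2 * j + 1)) / r) (θ + τ) - pS (r * q ^ (2 * (2 * j + 1))) (θ + τ)) := by
    calc ∑' k : ℕ, L k = ∑' (k : ℕ) (j : ℕ), gk q r θ τ k j :=
          tsum_congr fun k => ((hrow k).tsum_eq).symm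
    _ = ∑' (j : ℕ) (k : ℕ), gk q r θ τ k j := Summable.tsum_comm hguncurry.prod_symm
    _ = _ := tsum_congr fun j => (hcol j).tsum_eq
  have htel : ∑' j : ℕ, (f j - f (j + 1)) = f 0 := by
    rw [Summable.tsum_sub hfsummable hfs]
    have h0 := Summable.tsum_eq_zero_add hfsummable
    linarith
  have hfinal : ∑' k : ℕ, L k = pS r (θ - τ) + (∑' j : ℕ, P j) / 2 := by
    rw [hcoltsum, tsum_congr hTP, Summable.tsum_add (hPs.div_const 2) (hfsummable.sub hfs),
      tsum_div_const, htel]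
    have hf0 : f 0 = pS r (θ - τ) := by
      rw [hf_def]; norm_num
    rw [hf0]
    ring
  refine ⟨hLabs, hPabs, ?_⟩
  have hrabs : |r| < 1 := by rw [abs_of_nonneg hr0.le]; exact hr2
  have hpoisson := poisson_closed (θ - τ) hrabs
  have hπ : π ≠ 0 := Real.pi_ne_zero
  rw [hfinal, mul_div_assoc, hpoisson]
  field_simp
  ring
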